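/- arXiv:1902.00010 — 5 statements merged into one kernel-verified Lean document; each statement's English description precedes it below -/
import Mathlib

section
/- For every even integer d ≥ 2 there exists an irreducible homogeneous polynomial f ∈ ℂ[z₀,z₁,z₂,z₃] of degree d such that the zero locus V(f) ⊂ ℂℙ³ contains infinitely many twistor lines, i.e. the set of 2-dimensional complex subspaces W ⊆ ℂ⁴ with j̃(W) = W on which f vanishes identically is infinite. -/
/-- The conjugate-linear map `j̃ : ℂ⁴ → ℂ⁴`,
`j̃(z₀,z₁,z₂,z₃) = (−conj z₁, conj z₀, −conj z₃, conj z₂)`,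
inducing the fixed-point-free anti-holomorphic involution `j` on `ℂℙ³`. -/
noncomputable def jt (z : Fin 4 → ℂ) : Fin 4 → ℂ :=
  ![-(starRingEnd ℂ) (z 1), (starRingEnd ℂ) (z 0), -(starRingEnd ℂ) (z 3), (starRingEnd ℂ) (z 2)]

open MvPolynomial

noncomputable section TwistorAux


lemma prime_X3 (i : Fin 3) : Prime (X i : MvPolynomial (Fin 3) ℂ) := by
  let e := (renameEquiv ℂ (Equiv.swap i 0)).trans (finSuccEquiv ℂ 2)
  have h : e.toMulEquiv (X i) = Polynomial.X := by
    show e (X i) = Polynomial.X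
    simp [e, renameEquiv_apply, rename_X, Equiv.swap_apply_left, finSuccEquiv_X_zero]
  exact (MulEquiv.prime_iff e.toMulEquiv).mp (h ▸ Polynomial.prime_X)

variable {k : ℕ} {ω : ℂ}

lemma irredP (hk : 0 < k) (hω : ω ^ k = 2 * Complex.I) :
    Irreducible (Polynomial.C ((X 1 : MvPolynomial (Fin 3) ℂ)^k *
        (C (2*Complex.I) * X 0 ^ k - (X 2 + C ω * X 0)^k))
      + Polynomial.C ((X 0 : MvPolynomial (Fin 3) ℂ)^k) * Polynomial.X ^ k) := by
  set a : MvPolynomial (Fin 3) ℂ := (X 0)^k with ha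
  set b : MvPolynomial (Fin 3) ℂ :=
    (X 1)^k * (C (2*Complex.I) * X 0 ^ k - (X 2 + C ω * X 0)^k) with hb
  have hω0 : ω ≠ 0 := by
    intro h; rw [h, zero_pow hk.ne'] at hω
    exact two_ne_zero (by simpa [Complex.ext_iff] using hω.symm)
  have ha0 : a ≠ 0 := pow_ne_zero _ (X_ne_zero 0)
  -- b is divisible by X 2 :
  have hdvd : (X 2 : MvPolynomial (Fin 3) ℂ) ∣ b := by
    have h1 : (C (2*Complex.I) * X 0 ^ k : MvPolynomial (Fin 3) ℂ) = (C ω * X 0)^k := by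
      rw [mul_pow, ← C_pow, hω]
    rw [hb, h1]
    have := sub_dvd_pow_sub_pow (X 2 + C ω * X 0) (C ω * X 0 : MvPolynomial (Fin 3) ℂ) k
    simp only [add_sub_cancel_right] at this
    exact Dvd.dvd.mul_left (by rw [← neg_sub]; exact dvd_neg.mpr this) _
  -- coefficients
  have hco : ∀ n, (Polynomial.C b + Polynomial.C a * Polynomial.X ^ k).coeff n
      = (if n = 0 then b else 0) + (if n = k then a else 0) := by
    intro n
    simp [Polynomial.coeff_add, Polynomial.coeff_C, Polynomial.coeff_C_mul,
      Polynomial.coeff_X_pow, mul_ite]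
  have hlt : (Polynomial.C b).degree < (Polynomial.C a * Polynomial.X ^ k).degree := by
    rw [Polynomial.degree_C_mul_X_pow _ ha0]
    exact lt_of_le_of_lt Polynomial.degree_C_le (by exact_mod_cast Nat.cast_pos.mpr hk)
  have hdeg : (Polynomial.C b + Polynomial.C a * Polynomial.X ^ k).degree = (k : WithBot ℕ) := by
    rw [Polynomial.degree_add_eq_right_of_degree_lt hlt, Polynomial.degree_C_mul_X_pow _ ha0]
  have hnd : (Polynomial.C b + Polynomial.C a * Polynomial.X ^ k).natDegree = k :=
    Polynomial.natDegree_eq_of_degree_eq_some hdeg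
  have hP : (Ideal.span {(X 2 : MvPolynomial (Fin 3) ℂ)}).IsPrime :=
    (Ideal.span_singleton_prime (X_ne_zero 2)).mpr (prime_X3 2)
  refine Polynomial.irreducible_of_eisenstein_criterion hP ?_ ?_ ?_ ?_ ?_
  · -- leading coeff not in P
    rw [Polynomial.leadingCoeff, hnd, hco k, if_neg hk.ne', if_pos rfl, zero_add,
      Ideal.mem_span_singleton]
    intro hdvd2
    have := map_dvd (aeval ![X 0, X 1, 0] : MvPolynomial (Fin 3) ℂ →ₐ[ℂ] MvPolynomial (Fin 3) ℂ) hdvd2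
    simp only [map_pow, aeval_X, Matrix.cons_val_zero, Matrix.cons_val_two, Matrix.tail_cons,
      Matrix.head_cons, Matrix.cons_val_one] at this
    rw [zero_dvd_iff] at this
    exact ha0 (by simpa [ha] using this)
  · -- lower coefficients in P
    intro n hn
    rw [hdeg] at hn
    have hnk : n ≠ k := by exact_mod_cast Nat.ne_of_lt (by exact_mod_cast hn)
    rw [hco n, if_neg hnk, add_zero]
    by_cases h0 : n = 0
    · rw [if_pos h0]; exact Ideal.mem_span_singleton.mpr hdvd
    · rw [if_neg h0]; exact Ideal.zero_mem _
  · rw [hdeg]; exact_mod_cast Nat.cast_pos.mpr hk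
  · -- coeff 0 not in P^2
    rw [hco 0, if_pos rfl, if_neg (Ne.symm hk.ne'), add_zero,
      Ideal.span_singleton_pow, Ideal.mem_span_singleton]
    intro hdvd2
    have := map_dvd (aeval ![1, 1, Polynomial.X] :
      MvPolynomial (Fin 3) ℂ →ₐ[ℂ] Polynomial ℂ) hdvd2
    rw [hb] at this
    simp only [map_pow, map_mul, map_sub, map_add, aeval_X, aeval_C,
      Matrix.cons_val_zero, Matrix.cons_val_one, Matrix.head_cons, Matrix.cons_val_two,
      Matrix.tail_cons, one_pow, one_mul, mul_one] at this
    have h1 := (Polynomial.X_pow_dvd_iff.mp this) 1 one_lt_two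
    rw [Polynomial.coeff_sub] at h1
    simp only [Polynomial.algebraMap_eq, ← Polynomial.C_mul, Polynomial.coeff_C,
      if_neg (one_ne_zero), Polynomial.coeff_X_add_C_pow, Nat.choose_one_right,
      zero_sub, neg_eq_zero] at h1
    exact (mul_ne_zero (pow_ne_zero _ hω0) (Nat.cast_ne_zero.mpr hk.ne')) h1
  · -- primitive
    intro r hr
    have hrd := (Polynomial.C_dvd_iff_dvd_coeff r _).mp hr
    have hra : r ∣ a := by have := hrd k; rwa [hco k, if_neg hk.ne', if_pos rfl, zero_add] at this
    have hrb : r ∣ b := by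
      have := hrd 0; rwa [hco 0, if_pos rfl, if_neg (Ne.symm hk.ne'), add_zero] at this
    rw [ha] at hra
    obtain ⟨i, hik, hassoc⟩ := (dvd_prime_pow (prime_X3 0) k).mp hra
    rcases Nat.eq_zero_or_pos i with hi | hi
    · subst hi; exact hassoc.symm.isUnit (by rw [pow_zero]; exact isUnit_one)
    · exfalso
      have hX0r : (X 0 : MvPolynomial (Fin 3) ℂ) ∣ r :=
        dvd_trans (dvd_pow_self _ hi.ne') hassoc.symm.dvd
      have hX0b : (X 0 : MvPolynomial (Fin 3) ℂ) ∣ b := hX0r.trans hrb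
      have := map_dvd (aeval ![0, X 1, X 2] :
        MvPolynomial (Fin 3) ℂ →ₐ[ℂ] MvPolynomial (Fin 3) ℂ) hX0b
      rw [hb] at this
      simp only [map_pow, map_mul, map_sub, map_add, aeval_X,
        Matrix.cons_val_zero, Matrix.cons_val_one, Matrix.head_cons, Matrix.cons_val_two,
        Matrix.tail_cons, zero_pow hk.ne', mul_zero, zero_sub, add_zero, zero_dvd_iff, mul_neg,
        neg_eq_zero, mul_eq_zero, pow_eq_zero_iff hk.ne'] at this
      rcases this with h | h
      · exact X_ne_zero _ h
      · exact X_ne_zero _ h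

def Npoly (k : ℕ) (ω : ℂ) : MvPolynomial (Fin 4) ℂ :=
  X 1 ^ k * X 0 ^ k - X 2 ^ k * (X 3 + C ω * X 1) ^ k + C (2*Complex.I) * (X 2 ^ k * X 1 ^ k)

lemma irredN (hk : 0 < k) (hω : ω ^ k = 2 * Complex.I) : Irreducible (Npoly k ω) := by
  let e := finSuccEquiv ℂ 3
  have hC : ∀ c : ℂ, e (C c) = Polynomial.C (C c) := fun c => by
    simp [e, finSuccEquiv_apply]
  have hN : e.toMulEquiv (Npoly k ω) =
      Polynomial.C ((X 1 : MvPolynomial (Fin 3) ℂ)^k *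
        (C (2*Complex.I) * X 0 ^ k - (X 2 + C ω * X 0)^k))
      + Polynomial.C ((X 0 : MvPolynomial (Fin 3) ℂ)^k) * Polynomial.X ^ k := by
    show e (Npoly k ω) = _
    rw [Npoly]
    simp only [map_add, map_sub, map_mul, map_pow, hC,
      show (1 : Fin 4) = Fin.succ 0 from rfl, show (2 : Fin 4) = Fin.succ 1 from rfl,
      show (3 : Fin 4) = Fin.succ 2 from rfl, e, finSuccEquiv_X_zero, finSuccEquiv_X_succ]
    ring
  exact (MulEquiv.irreducible_iff e.toMulEquiv).mp (hN ▸ irredP hk hω)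

def Fexp (k : ℕ) : MvPolynomial (Fin 4) ℂ :=
  (X 0 + X 1) ^ k * (X 2 + X 3) ^ k - (X 0 - X 1) ^ k * (X 3 - X 2) ^ k
    + C (2*Complex.I) * ((X 0 - X 1) ^ k * (X 0 + X 1) ^ k)

lemma irredF (hk : 0 < k) (hω : ω ^ k = 2 * Complex.I) : Irreducible (Fexp k) := by
  let g : Fin 4 → MvPolynomial (Fin 4) ℂ :=
    ![X 2 + X 3, X 0 + X 1, X 0 - X 1, (X 3 - X 2) - C ω * (X 0 + X 1)]
  let gi : Fin 4 → MvPolynomial (Fin 4) ℂ :=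
    ![C (2⁻¹ : ℂ) * (X 1 + X 2), C (2⁻¹ : ℂ) * (X 1 - X 2),
      C (2⁻¹ : ℂ) * (X 0 - X 3 - C ω * X 1), C (2⁻¹ : ℂ) * (X 0 + X 3 + C ω * X 1)]
  have hcomp1 : (aeval g).comp (aeval gi) = AlgHom.id ℂ (MvPolynomial (Fin 4) ℂ) := by
    apply MvPolynomial.algHom_ext
    intro i
    fin_cases i <;>
      · simp [g, gi, map_add, map_sub, map_mul, aeval_X, algebraMap_eq]
        ring_nf
        rw [show (2 : MvPolynomial (Fin 4) ℂ) = C (2:ℂ) from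
          (map_ofNat (C : ℂ →+* MvPolynomial (Fin 4) ℂ) 2).symm, mul_comm, ← mul_assoc, ← C_mul]
        norm_num
  have hcomp2 : (aeval gi).comp (aeval g) = AlgHom.id ℂ (MvPolynomial (Fin 4) ℂ) := by
    apply MvPolynomial.algHom_ext
    intro i
    fin_cases i <;>
      · simp [g, gi, map_add, map_sub, map_mul, aeval_X, algebraMap_eq]
        ring_nf
        rw [show (2 : MvPolynomial (Fin 4) ℂ) = C (2:ℂ) from
          (map_ofNat (C : ℂ →+* MvPolynomial (Fin 4) ℂ) 2).symm, mul_comm, ← mul_assoc, ← C_mul]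
        norm_num
  let σ : MvPolynomial (Fin 4) ℂ ≃ₐ[ℂ] MvPolynomial (Fin 4) ℂ :=
    AlgEquiv.ofAlgHom (aeval g) (aeval gi) hcomp1 hcomp2
  have hσ : σ.toMulEquiv (Npoly k ω) = Fexp k := by
    show aeval g (Npoly k ω) = Fexp k
    rw [Npoly, Fexp]
    simp only [map_add, map_sub, map_mul, map_pow, aeval_X, aeval_C, algebraMap_eq, g,
      Matrix.cons_val_zero, Matrix.cons_val_one, Matrix.head_cons,
      Matrix.cons_val_two, Matrix.tail_cons, Matrix.cons_val_three]
    ring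
  exact hσ ▸ (MulEquiv.irreducible_iff σ.toMulEquiv).mpr (irredN hk hω)

lemma homogF (k : ℕ) : (Fexp k).IsHomogeneous (k + k) := by
  have h01 : ((X 0 + X 1 : MvPolynomial (Fin 4) ℂ)).IsHomogeneous 1 :=
    (isHomogeneous_X _ _).add (isHomogeneous_X _ _)
  have h01' : ((X 0 - X 1 : MvPolynomial (Fin 4) ℂ)).IsHomogeneous 1 :=
    (isHomogeneous_X _ _).sub (isHomogeneous_X _ _)
  have h23 : ((X 2 + X 3 : MvPolynomial (Fin 4) ℂ)).IsHomogeneous 1 :=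
    (isHomogeneous_X _ _).add (isHomogeneous_X _ _)
  have h23' : ((X 3 - X 2 : MvPolynomial (Fin 4) ℂ)).IsHomogeneous 1 :=
    (isHomogeneous_X _ _).sub (isHomogeneous_X _ _)
  have hp : ∀ (φ : MvPolynomial (Fin 4) ℂ), φ.IsHomogeneous 1 → (φ ^ k).IsHomogeneous k := by
    intro φ hφ
    simpa using hφ.pow k
  exact (((hp _ h01).mul (hp _ h23)).sub ((hp _ h01').mul (hp _ h23'))).add
    ((((hp _ h01').mul (hp _ h01)).C_mul _))

def v1 (p : ℂ) : Fin 4 → ℂ := ![1, -1, p, p]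
def v2 (p : ℂ) : Fin 4 → ℂ := ![1, 1, -(starRingEnd ℂ) p, (starRingEnd ℂ) p]


def Wp (p : ℂ) : Submodule ℂ (Fin 4 → ℂ) := Submodule.span ℂ {v1 p, v2 p}

lemma jt_formula (p m n : ℂ) :
    jt (m • v1 p + n • v2 p)
      = (-(starRingEnd ℂ) n) • v1 p + ((starRingEnd ℂ) m) • v2 p := by
  funext i
  fin_cases i <;>
    simp [jt, v1, v2, Pi.add_apply, Pi.smul_apply, smul_eq_mul, map_add, map_mul,
      map_neg, map_one, Complex.conj_conj] <;> ring

lemma jt_image (p : ℂ) : jt '' (Wp p : Set (Fin 4 → ℂ)) = (Wp p : Set (Fin 4 → ℂ)) := by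
  apply Set.Subset.antisymm
  · rintro _ ⟨z, hz, rfl⟩
    obtain ⟨m, n, rfl⟩ := Submodule.mem_span_pair.mp hz
    rw [jt_formula]
    exact Submodule.mem_span_pair.mpr ⟨_, _, rfl⟩
  · intro z hz
    obtain ⟨m, n, rfl⟩ := Submodule.mem_span_pair.mp hz
    refine ⟨((starRingEnd ℂ) n) • v1 p + (-(starRingEnd ℂ) m) • v2 p,
      Submodule.mem_span_pair.mpr ⟨_, _, rfl⟩, ?_⟩
    rw [jt_formula]
    simp [Complex.conj_conj]

lemma finrank_Wp (p : ℂ) : Module.finrank ℂ (Wp p) = 2 := by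
  have hli : LinearIndependent ℂ ![v1 p, v2 p] := by
    rw [linearIndependent_fin2]
    constructor
    · intro h
      have := congr_fun h 0
      simp [v1, v2, Matrix.cons_val_zero] at this
    · intro a h
      have h0 := congr_fun h 0
      have h1 := congr_fun h 1
      simp [v1, v2, Pi.smul_apply, smul_eq_mul] at h0 h1
      rw [h0] at h1
      norm_num at h1
  have hcard := finrank_span_eq_card hli
  have hset : Set.range ![v1 p, v2 p] = {v1 p, v2 p} := Matrix.range_cons_cons_empty _ _ _
  rw [Wp, ← hset]
  simpa using hcard

lemma eval_Fexp (hk : 0 < k) {p : ℂ} (hp : ((p : ℂ) ^ k).im = -1) :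
    ∀ w ∈ Wp p, MvPolynomial.eval w (Fexp k) = 0 := by
  have hrel : p ^ k - ((starRingEnd ℂ) p) ^ k + 2 * Complex.I = 0 := by
    have h1 := Complex.sub_conj (p ^ k)
    rw [map_pow, hp] at h1
    push_cast at h1
    linear_combination h1
  intro w hw
  obtain ⟨m, n, rfl⟩ := Submodule.mem_span_pair.mp hw
  rw [Fexp]
  simp only [map_add, map_sub, map_mul, map_pow, eval_X, eval_C,
    Pi.add_apply, Pi.smul_apply, smul_eq_mul, v1, v2,
    Matrix.cons_val_zero, Matrix.cons_val_one, Matrix.head_cons,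
    Matrix.cons_val_two, Matrix.tail_cons, Matrix.cons_val_three]
  linear_combination ((2*n)^k * (2*m)^k) * hrel

lemma Wp_inj : Function.Injective Wp := by
  intro p q h
  have hv : v1 p ∈ Wp q := by
    rw [← h]
    exact Submodule.subset_span (by left; rfl)
  obtain ⟨m, n, hmn⟩ := Submodule.mem_span_pair.mp hv
  have h0 := congr_fun hmn 0
  have h1 := congr_fun hmn 1
  have h2 := congr_fun hmn 2
  simp only [v1, v2, Pi.add_apply, Pi.smul_apply, smul_eq_mul,
    Matrix.cons_val_zero, Matrix.cons_val_one, Matrix.head_cons,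
    Matrix.cons_val_two, Matrix.tail_cons, mul_one, mul_neg] at h0 h1 h2
  have hn : n = 0 := by linear_combination (h0 + h1) / 2
  have hm : m = 1 := by linear_combination (h0 - h1) / 2
  rw [hn, hm] at h2
  simpa using h2.symm

lemma setA_infinite (hk : 0 < k) : {p : ℂ | ((p : ℂ) ^ k).im = -1}.Infinite := by
  set A := {p : ℂ | ((p : ℂ) ^ k).im = -1}
  have hB : {w : ℂ | w.im = -1}.Infinite := by
    refine Set.infinite_of_injective_forall_mem
      (f := fun t : ℝ => (t : ℂ) - Complex.I) ?_ ?_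
    · intro s t hst
      simpa [Complex.ext_iff] using hst
    · intro t
      simp [Complex.sub_im]
  have hsub : {w : ℂ | w.im = -1} ⊆ (fun p : ℂ => p ^ k) '' A := by
    intro w hw
    obtain ⟨p, hp⟩ := Complex.isAlgClosed.exists_pow_nat_eq w hk
    exact ⟨p, by simpa [A, hp] using hw, hp⟩
  exact Set.Infinite.of_image _ (hB.mono hsub)

end TwistorAux

/-- For every even integer `d ≥ 2` there exists an irreducible homogeneous polynomial `f` of
degree `d` on `ℂ⁴` whose zero locus `V(f) ⊆ ℂℙ³` contains infinitely many twistor lines: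
the set of 2-dimensional complex subspaces `W ⊆ ℂ⁴` with `j̃(W) = W` on which `f` vanishes
identically is infinite. -/
theorem stmt1 (d : ℕ) (hd : 2 ≤ d) (hde : Even d) :
    ∃ f : MvPolynomial (Fin 4) ℂ, Irreducible f ∧ f.IsHomogeneous d ∧
      {W : Submodule ℂ (Fin 4 → ℂ) |
        Module.finrank ℂ W = 2 ∧ jt '' (W : Set (Fin 4 → ℂ)) = (W : Set (Fin 4 → ℂ)) ∧
        ∀ w ∈ W, MvPolynomial.eval w f = 0}.Infinite := by
  obtain ⟨r, hr⟩ := hde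
  have hk : 0 < r := by omega
  obtain ⟨ω, hω⟩ := Complex.isAlgClosed.exists_pow_nat_eq (2 * Complex.I) hk
  refine ⟨Fexp r, irredF hk hω, by rw [hr]; exact homogF r, ?_⟩
  have himg : (Wp '' {p : ℂ | ((p : ℂ) ^ r).im = -1}).Infinite :=
    (setA_infinite hk).image (Wp_inj.injOn)
  apply himg.mono
  rintro W ⟨p, hp, rfl⟩
  exact ⟨finrank_Wp p, jt_image p, eval_Fexp hk hp⟩
end

section
/- For every nonzero z ∈ ℂ⁴, the fiber of the twistor projection π through the point [z] ∈ ℂℙ³ is the projectivization of the 2-dimensional complex subspace spanned by z and j̃(z); that is, π⁻¹(π[z]) = ℙ(span_ℂ{z, j̃(z)}). -/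
lemma jt_ne_zero {z : Fin 4 → ℂ} (hz : z ≠ 0) : jt z ≠ 0 := by
  intro h
  apply hz
  have h0 := congrFun h 0
  have h1 := congrFun h 1
  have h2 := congrFun h 2
  have h3 := congrFun h 3
  simp [jt] at h0 h1 h2 h3
  funext i
  fin_cases i <;> simp [h0, h1, h2, h3]

/-- The embedding `ℂ → ℍ` identifying `ℂ` with the subfield of `ℍ` spanned by `1` and `i`. -/
noncomputable def toQ (z : ℂ) : Quaternion ℝ := ⟨z.re, z.im, 0, 0⟩

/-- The imaginary unit `j ∈ ℍ`. -/
noncomputable def qJ : Quaternion ℝ := ⟨0, 0, 1, 0⟩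

lemma toQ_add_mul (a b : ℂ) :
    toQ a + toQ b * qJ = (⟨a.re, a.im, b.re, b.im⟩ : Quaternion ℝ) := by
  ext <;> simp [Quaternion.re_mul, Quaternion.imI_mul, Quaternion.imJ_mul, Quaternion.imK_mul] <;> simp [toQ, qJ]

/-- The vector-level twistor projection `(z₀,z₁,z₂,z₃) ↦ (z₀+z₁j, z₂+z₃j) ∈ ℍ²`. -/
noncomputable def piv (z : Fin 4 → ℂ) : Fin 2 → Quaternion ℝ :=
  ![toQ (z 0) + toQ (z 1) * qJ, toQ (z 2) + toQ (z 3) * qJ]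

lemma piv_ne_zero {z : Fin 4 → ℂ} (hz : z ≠ 0) : piv z ≠ 0 := by
  intro h
  apply hz
  have h0 := congrFun h 0
  have h1 := congrFun h 1
  simp only [piv, toQ_add_mul, Matrix.cons_val_zero, Matrix.cons_val_one, Matrix.head_cons,
    Pi.zero_apply] at h0 h1
  rw [Quaternion.ext_iff] at h0 h1
  simp at h0 h1
  funext i
  fin_cases i <;> apply Complex.ext <;> simp [h0.1, h0.2.1, h0.2.2.1, h0.2.2.2,
    h1.1, h1.2.1, h1.2.2.1, h1.2.2.2] <;> rfl

/-- The twistor projection `π : ℂℙ³ → ℍℙ¹`, `π[z₀,z₁,z₂,z₃] = [z₀+z₁j, z₂+z₃j]`,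
where `ℍℙ¹` is the projectivization of `ℍ²` as a left `ℍ`-module. -/
noncomputable def twistorProj (x : Projectivization ℂ (Fin 4 → ℂ)) :
    Projectivization (Quaternion ℝ) (Fin 2 → Quaternion ℝ) :=
  Projectivization.mk (Quaternion ℝ) (piv x.rep) (piv_ne_zero x.rep_nonzero)

/-- The projectivization `ℙ(W) ⊆ ℂℙ³` of a complex subspace `W ⊆ ℂ⁴`:
the set of points of `ℂℙ³` whose representatives lie in `W`. -/
def projSet (W : Submodule ℂ (Fin 4 → ℂ)) : Set (Projectivization ℂ (Fin 4 → ℂ)) :=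
  {x | x.rep ∈ W}

lemma piv_comb (a b : ℂ) (z : Fin 4 → ℂ) :
    piv (a • z + b • jt z) = (toQ a + toQ b * qJ) • piv z := by
  funext i
  fin_cases i <;>
  · show _ = (toQ a + toQ b * qJ) * _
    ext <;>
      simp [piv, Quaternion.re_mul, Quaternion.imI_mul, Quaternion.imJ_mul, Quaternion.imK_mul] <;>
      simp [piv, jt, toQ, qJ, Quaternion.re_mul, Quaternion.imI_mul, Quaternion.imJ_mul,
        Quaternion.imK_mul, Complex.mul_re, Complex.mul_im] <;> ring

lemma piv_inj {w v : Fin 4 → ℂ} (h : piv w = piv v) : w = v := by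
  have h0 := congrFun h 0
  have h1 := congrFun h 1
  simp only [piv, Matrix.cons_val_zero, Matrix.cons_val_one, Matrix.head_cons,
    toQ_add_mul] at h0 h1
  rw [Quaternion.ext_iff] at h0 h1
  simp at h0 h1
  funext i
  fin_cases i <;> apply Complex.ext <;>
    simp [h0.1, h0.2.1, h0.2.2.1, h0.2.2.2, h1.1, h1.2.1, h1.2.2.1, h1.2.2.2]

lemma quat_decomp (q : Quaternion ℝ) : ∃ a b : ℂ, toQ a + toQ b * qJ = q :=
  ⟨⟨q.re, q.imI⟩, ⟨q.imJ, q.imK⟩, by ext <;> simp [Quaternion.re_mul, Quaternion.imI_mul, Quaternion.imJ_mul, Quaternion.imK_mul] <;> simp [toQ, qJ]⟩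

lemma piv_smul (c : ℂ) (z : Fin 4 → ℂ) : piv (c • z) = toQ c • piv z := by
  have h := piv_comb c 0 z
  have h0 : toQ 0 = 0 := by ext <;> simp [toQ] <;> rfl
  simpa [h0] using h

lemma twistorProj_mk (z : Fin 4 → ℂ) (hz : z ≠ 0) :
    twistorProj (Projectivization.mk ℂ z hz) =
      Projectivization.mk (Quaternion ℝ) (piv z) (piv_ne_zero hz) := by
  obtain ⟨c, hc⟩ := Projectivization.exists_smul_eq_mk_rep ℂ z hz
  rw [twistorProj, Projectivization.mk_eq_mk_iff']
  rw [Units.smul_def] at hc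
  exact ⟨toQ (c : ℂ), by rw [← piv_smul, hc]⟩


/-- For every nonzero `z ∈ ℂ⁴`, the fiber of the twistor projection `π` through the point
`[z] ∈ ℂℙ³` is the projectivization of the 2-dimensional complex subspace spanned by `z` and
`j̃(z)`: `π⁻¹(π[z]) = ℙ(span_ℂ{z, j̃(z)})`. -/
theorem stmt4 (z : Fin 4 → ℂ) (hz : z ≠ 0) :
    twistorProj ⁻¹' {twistorProj (Projectivization.mk ℂ z hz)} =
      projSet (Submodule.span ℂ {z, jt z}) := by
  ext x
  simp only [Set.mem_preimage, Set.mem_singleton_iff, twistorProj_mk]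
  simp only [projSet, Set.mem_setOf_eq, twistorProj]
  rw [Projectivization.mk_eq_mk_iff', Submodule.mem_span_pair]
  constructor
  · rintro ⟨q, hq⟩
    obtain ⟨a, b, rfl⟩ := quat_decomp q
    exact ⟨a, b, piv_inj (by rw [piv_comb, hq])⟩
  · rintro ⟨a, b, h⟩
    exact ⟨toQ a + toQ b * qJ, by rw [← piv_comb, h]⟩
end

section
/- If W₁ and W₂ are distinct 2-dimensional complex subspaces of ℂ⁴ with j̃(W₁) = W₁ and j̃(W₂) = W₂, then W₁ ∩ W₂ = {0}; in other words, any two distinct twistor lines in ℂℙ³ are disjoint. -/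
lemma jt_zero : jt 0 = 0 := by
  funext i; fin_cases i <;> simp [jt]

lemma jt_add (x y : Fin 4 → ℂ) : jt (x + y) = jt x + jt y := by
  funext i; fin_cases i <;> simp [jt] <;> ring

lemma jt_smul (c : ℂ) (x : Fin 4 → ℂ) : jt (c • x) = (starRingEnd ℂ) c • jt x := by
  funext i; fin_cases i <;> simp [jt] <;> ring

lemma jt_jt (x : Fin 4 → ℂ) : jt (jt x) = -x := by
  funext i; fin_cases i <;> simp [jt]

lemma jt_pair_indep {v : Fin 4 → ℂ} (hv : v ≠ 0) : LinearIndependent ℂ ![v, jt v] := by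
  rw [LinearIndependent.pair_iff]
  intro s t hst
  by_contra h
  push_neg at h
  -- apply jt to the relation
  have h2 : (starRingEnd ℂ) s • jt v + (starRingEnd ℂ) t • (-v) = 0 := by
    have := congrArg jt hst
    rw [jt_add, jt_smul, jt_smul, jt_jt] at this
    simpa [jt_zero] using this
  have key : (s * (starRingEnd ℂ) s + t * (starRingEnd ℂ) t) • v = 0 := by
    have e1 : t • jt v = -(s • v) := by
      have := hst
      linear_combination (norm := module) this
    have e2 : (starRingEnd ℂ) s • jt v = (starRingEnd ℂ) t • v := by
      linear_combination (norm := module) h2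
    calc (s * (starRingEnd ℂ) s + t * (starRingEnd ℂ) t) • v
        = (starRingEnd ℂ) s • (s • v) + t • ((starRingEnd ℂ) t • v) := by module
      _ = (starRingEnd ℂ) s • (-(t • jt v)) + t • ((starRingEnd ℂ) s • jt v) := by
          rw [e1, e2]; module
      _ = 0 := by module
  have hc : s * (starRingEnd ℂ) s + t * (starRingEnd ℂ) t = 0 := by
    by_contra hc
    exact hv (by simpa [hc, smul_eq_zero] using key)
  have : s = 0 ∧ t = 0 := by
    have hs : Complex.normSq s + Complex.normSq t = 0 := by
      have := congrArg Complex.re hc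
      simpa [Complex.mul_conj, Complex.add_re, Complex.ofReal_re] using this
    constructor
    · exact Complex.normSq_eq_zero.mp (by nlinarith [Complex.normSq_nonneg s, Complex.normSq_nonneg t])
    · exact Complex.normSq_eq_zero.mp (by nlinarith [Complex.normSq_nonneg s, Complex.normSq_nonneg t])
  rcases h this.1 with h'
  exact h' this.2

/-- Distinct 2-dimensional complex subspaces `W₁ ≠ W₂` of `ℂ⁴` with `j̃(W₁) = W₁` and
`j̃(W₂) = W₂` intersect trivially: any two distinct twistor lines in `ℂℙ³` are disjoint. -/
theorem stmt7 (W₁ W₂ : Submodule ℂ (Fin 4 → ℂ))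
    (h1 : Module.finrank ℂ W₁ = 2) (h2 : Module.finrank ℂ W₂ = 2)
    (hj1 : jt '' (W₁ : Set (Fin 4 → ℂ)) = (W₁ : Set (Fin 4 → ℂ)))
    (hj2 : jt '' (W₂ : Set (Fin 4 → ℂ)) = (W₂ : Set (Fin 4 → ℂ)))
    (hne : W₁ ≠ W₂) :
    W₁ ⊓ W₂ = ⊥ := by
  by_contra hK
  obtain ⟨v, hvK, hv⟩ := Submodule.exists_mem_ne_zero_of_ne_bot hK
  have hv1 : v ∈ W₁ := hvK.1
  have hv2 : v ∈ W₂ := hvK.2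
  have hjv1 : jt v ∈ W₁ := by
    have : jt v ∈ jt '' (W₁ : Set (Fin 4 → ℂ)) := ⟨v, hv1, rfl⟩
    rwa [hj1] at this
  have hjv2 : jt v ∈ W₂ := by
    have : jt v ∈ jt '' (W₂ : Set (Fin 4 → ℂ)) := ⟨v, hv2, rfl⟩
    rwa [hj2] at this
  have hjvK : jt v ∈ W₁ ⊓ W₂ := ⟨hjv1, hjv2⟩
  have hind := jt_pair_indep hv
  have hspan : Submodule.span ℂ (Set.range ![v, jt v]) ≤ W₁ ⊓ W₂ := by
    rw [Submodule.span_le]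
    rintro x ⟨i, rfl⟩
    fin_cases i
    · exact hvK
    · exact hjvK
  have hrank : Module.finrank ℂ (Submodule.span ℂ (Set.range ![v, jt v])) = 2 := by
    rw [finrank_span_eq_card hind]; simp
  have hK2 : 2 ≤ Module.finrank ℂ (W₁ ⊓ W₂ : Submodule ℂ (Fin 4 → ℂ)) := by
    rw [← hrank]; exact Submodule.finrank_mono hspan
  have hle1 : Module.finrank ℂ (W₁ ⊓ W₂ : Submodule ℂ (Fin 4 → ℂ)) ≤ 2 := by
    rw [← h1]; exact Submodule.finrank_mono inf_le_left
  have heq : Module.finrank ℂ (W₁ ⊓ W₂ : Submodule ℂ (Fin 4 → ℂ)) = 2 := le_antisymm hle1 hK2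
  have e1 : W₁ ⊓ W₂ = W₁ := Submodule.eq_of_le_of_finrank_eq inf_le_left (by omega)
  have e2 : W₁ ⊓ W₂ = W₂ := Submodule.eq_of_le_of_finrank_eq inf_le_right (by omega)
  exact hne (e1 ▸ e2)
end

section
/- Let u, v ∈ ℂ⁴ be linearly independent and let W = span_ℂ{u, v}. If the Plücker coordinates t₁,…,t₆ of the pair (u,v) are all real and satisfy t₂ = t₅ and t₃ = −t₄, then j̃(W) = W, i.e. the projective line ℙ(W) is a twistor line. -/
/-- The Plücker coordinates `(t₁,…,t₆)` of a pair of vectors `(u,v)` in `ℂ⁴`: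
`t₁ = u₀v₁−u₁v₀`, `t₂ = u₀v₂−u₂v₀`, `t₃ = u₀v₃−u₃v₀`, `t₄ = u₁v₂−u₂v₁`,
`t₅ = u₁v₃−u₃v₁`, `t₆ = u₂v₃−u₃v₂` (indexed here by `Fin 6`, so `t_{i+1} = plucker u v i`). -/
noncomputable def plucker (u v : Fin 4 → ℂ) : Fin 6 → ℂ :=
  ![u 0 * v 1 - u 1 * v 0, u 0 * v 2 - u 2 * v 0, u 0 * v 3 - u 3 * v 0,
    u 1 * v 2 - u 2 * v 1, u 1 * v 3 - u 3 * v 1, u 2 * v 3 - u 3 * v 2]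

lemma dep_of_minors (u v : Fin 4 → ℂ)
    (h1 : u 0 * v 1 - u 1 * v 0 = 0) (h2 : u 0 * v 2 - u 2 * v 0 = 0)
    (h3 : u 0 * v 3 - u 3 * v 0 = 0) (h4 : u 1 * v 2 - u 2 * v 1 = 0)
    (h5 : u 1 * v 3 - u 3 * v 1 = 0) (h6 : u 2 * v 3 - u 3 * v 2 = 0) :
    ¬ LinearIndependent ℂ ![u, v] := by
  have huv : ∀ i j : Fin 4, u i * v j = u j * v i := by
    intro i j
    fin_cases i <;> fin_cases j <;>
      simp only [show ((⟨0, by omega⟩ : Fin 4)) = 0 from rfl, show ((⟨1, by omega⟩ : Fin 4)) = 1 from rfl,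
        show ((⟨2, by omega⟩ : Fin 4)) = 2 from rfl, show ((⟨3, by omega⟩ : Fin 4)) = 3 from rfl] <;>
      [linear_combination h1; linear_combination h2; linear_combination h3;
       linear_combination -h1; linear_combination h4; linear_combination h5;
       linear_combination -h2; linear_combination -h4; linear_combination h6;
       linear_combination -h3; linear_combination -h5; linear_combination -h6]
  rw [linearIndependent_fin2]
  push_neg
  intro hv
  obtain ⟨j, hj⟩ : ∃ j, v j ≠ 0 := by
    by_contra h
    push_neg at h
    exact hv (funext fun k => h k)
  refine ⟨u j / v j, funext fun k => ?_⟩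
  simp only [Pi.smul_apply, smul_eq_mul]
  rw [div_mul_eq_mul_div, div_eq_iff hj]
  exact huv j k

lemma mem_span_of_minors (u v w : Fin 4 → ℂ) (hli : LinearIndependent ℂ ![u, v])
    (h012 : w 0 * (u 1 * v 2 - u 2 * v 1) - w 1 * (u 0 * v 2 - u 2 * v 0)
      + w 2 * (u 0 * v 1 - u 1 * v 0) = 0)
    (h013 : w 0 * (u 1 * v 3 - u 3 * v 1) - w 1 * (u 0 * v 3 - u 3 * v 0)
      + w 3 * (u 0 * v 1 - u 1 * v 0) = 0)
    (h023 : w 0 * (u 2 * v 3 - u 3 * v 2) - w 2 * (u 0 * v 3 - u 3 * v 0)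
      + w 3 * (u 0 * v 2 - u 2 * v 0) = 0)
    (h123 : w 1 * (u 2 * v 3 - u 3 * v 2) - w 2 * (u 1 * v 3 - u 3 * v 1)
      + w 3 * (u 1 * v 2 - u 2 * v 1) = 0) :
    w ∈ Submodule.span ℂ ({u, v} : Set (Fin 4 → ℂ)) := by
  rw [Submodule.mem_span_pair]
  by_cases n1 : u 0 * v 1 - u 1 * v 0 ≠ 0
  · refine ⟨(w 0 * v 1 - w 1 * v 0) / (u 0 * v 1 - u 1 * v 0),
      (u 0 * w 1 - u 1 * w 0) / (u 0 * v 1 - u 1 * v 0), funext fun k => ?_⟩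
    simp only [Pi.add_apply, Pi.smul_apply, smul_eq_mul]
    fin_cases k <;>
      simp only [show ((⟨0, by omega⟩ : Fin 4)) = 0 from rfl, show ((⟨1, by omega⟩ : Fin 4)) = 1 from rfl,
        show ((⟨2, by omega⟩ : Fin 4)) = 2 from rfl, show ((⟨3, by omega⟩ : Fin 4)) = 3 from rfl] <;>
      rw [div_mul_eq_mul_div, div_mul_eq_mul_div, ← add_div, div_eq_iff n1] <;>
      first
        | ring1
        | linear_combination h012 | linear_combination -h012
        | linear_combination h013 | linear_combination -h013
        | linear_combination h023 | linear_combination -h023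
        | linear_combination h123 | linear_combination -h123
  push_neg at n1
  by_cases n2 : u 0 * v 2 - u 2 * v 0 ≠ 0
  · refine ⟨(w 0 * v 2 - w 2 * v 0) / (u 0 * v 2 - u 2 * v 0),
      (u 0 * w 2 - u 2 * w 0) / (u 0 * v 2 - u 2 * v 0), funext fun k => ?_⟩
    simp only [Pi.add_apply, Pi.smul_apply, smul_eq_mul]
    fin_cases k <;>
      simp only [show ((⟨0, by omega⟩ : Fin 4)) = 0 from rfl, show ((⟨1, by omega⟩ : Fin 4)) = 1 from rfl,
        show ((⟨2, by omega⟩ : Fin 4)) = 2 from rfl, show ((⟨3, by omega⟩ : Fin 4)) = 3 from rfl] <;>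
      rw [div_mul_eq_mul_div, div_mul_eq_mul_div, ← add_div, div_eq_iff n2] <;>
      first
        | ring1
        | linear_combination h012 | linear_combination -h012
        | linear_combination h013 | linear_combination -h013
        | linear_combination h023 | linear_combination -h023
        | linear_combination h123 | linear_combination -h123
  push_neg at n2
  by_cases n3 : u 0 * v 3 - u 3 * v 0 ≠ 0
  · refine ⟨(w 0 * v 3 - w 3 * v 0) / (u 0 * v 3 - u 3 * v 0),
      (u 0 * w 3 - u 3 * w 0) / (u 0 * v 3 - u 3 * v 0), funext fun k => ?_⟩
    simp only [Pi.add_apply, Pi.smul_apply, smul_eq_mul]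
    fin_cases k <;>
      simp only [show ((⟨0, by omega⟩ : Fin 4)) = 0 from rfl, show ((⟨1, by omega⟩ : Fin 4)) = 1 from rfl,
        show ((⟨2, by omega⟩ : Fin 4)) = 2 from rfl, show ((⟨3, by omega⟩ : Fin 4)) = 3 from rfl] <;>
      rw [div_mul_eq_mul_div, div_mul_eq_mul_div, ← add_div, div_eq_iff n3] <;>
      first
        | ring1
        | linear_combination h012 | linear_combination -h012
        | linear_combination h013 | linear_combination -h013
        | linear_combination h023 | linear_combination -h023
        | linear_combination h123 | linear_combination -h123
  push_neg at n3
  by_cases n4 : u 1 * v 2 - u 2 * v 1 ≠ 0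
  · refine ⟨(w 1 * v 2 - w 2 * v 1) / (u 1 * v 2 - u 2 * v 1),
      (u 1 * w 2 - u 2 * w 1) / (u 1 * v 2 - u 2 * v 1), funext fun k => ?_⟩
    simp only [Pi.add_apply, Pi.smul_apply, smul_eq_mul]
    fin_cases k <;>
      simp only [show ((⟨0, by omega⟩ : Fin 4)) = 0 from rfl, show ((⟨1, by omega⟩ : Fin 4)) = 1 from rfl,
        show ((⟨2, by omega⟩ : Fin 4)) = 2 from rfl, show ((⟨3, by omega⟩ : Fin 4)) = 3 from rfl] <;>
      rw [div_mul_eq_mul_div, div_mul_eq_mul_div, ← add_div, div_eq_iff n4] <;>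
      first
        | ring1
        | linear_combination h012 | linear_combination -h012
        | linear_combination h013 | linear_combination -h013
        | linear_combination h023 | linear_combination -h023
        | linear_combination h123 | linear_combination -h123
  push_neg at n4
  by_cases n5 : u 1 * v 3 - u 3 * v 1 ≠ 0
  · refine ⟨(w 1 * v 3 - w 3 * v 1) / (u 1 * v 3 - u 3 * v 1),
      (u 1 * w 3 - u 3 * w 1) / (u 1 * v 3 - u 3 * v 1), funext fun k => ?_⟩
    simp only [Pi.add_apply, Pi.smul_apply, smul_eq_mul]
    fin_cases k <;>
      simp only [show ((⟨0, by omega⟩ : Fin 4)) = 0 from rfl, show ((⟨1, by omega⟩ : Fin 4)) = 1 from rfl,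
        show ((⟨2, by omega⟩ : Fin 4)) = 2 from rfl, show ((⟨3, by omega⟩ : Fin 4)) = 3 from rfl] <;>
      rw [div_mul_eq_mul_div, div_mul_eq_mul_div, ← add_div, div_eq_iff n5] <;>
      first
        | ring1
        | linear_combination h012 | linear_combination -h012
        | linear_combination h013 | linear_combination -h013
        | linear_combination h023 | linear_combination -h023
        | linear_combination h123 | linear_combination -h123
  push_neg at n5
  by_cases n6 : u 2 * v 3 - u 3 * v 2 ≠ 0
  · refine ⟨(w 2 * v 3 - w 3 * v 2) / (u 2 * v 3 - u 3 * v 2),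
      (u 2 * w 3 - u 3 * w 2) / (u 2 * v 3 - u 3 * v 2), funext fun k => ?_⟩
    simp only [Pi.add_apply, Pi.smul_apply, smul_eq_mul]
    fin_cases k <;>
      simp only [show ((⟨0, by omega⟩ : Fin 4)) = 0 from rfl, show ((⟨1, by omega⟩ : Fin 4)) = 1 from rfl,
        show ((⟨2, by omega⟩ : Fin 4)) = 2 from rfl, show ((⟨3, by omega⟩ : Fin 4)) = 3 from rfl] <;>
      rw [div_mul_eq_mul_div, div_mul_eq_mul_div, ← add_div, div_eq_iff n6] <;>
      first
        | ring1
        | linear_combination h012 | linear_combination -h012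
        | linear_combination h013 | linear_combination -h013
        | linear_combination h023 | linear_combination -h023
        | linear_combination h123 | linear_combination -h123
  push_neg at n6
  exact absurd hli (dep_of_minors u v n1 n2 n3 n4 n5 n6)


/-- If `u, v ∈ ℂ⁴` are linearly independent and the Plücker coordinates `t₁,…,t₆` of `(u,v)`
are all real and satisfy `t₂ = t₅` and `t₃ = −t₄`, then `W = span_ℂ{u,v}` satisfies
`j̃(W) = W`, i.e. the projective line `ℙ(W)` is a twistor line. -/
theorem stmt10 (u v : Fin 4 → ℂ) (hli : LinearIndependent ℂ ![u, v])
    (hreal : ∀ i : Fin 6, (plucker u v i).im = 0)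
    (h25 : plucker u v 1 = plucker u v 4)
    (h34 : plucker u v 2 = -plucker u v 3) :
    jt '' (Submodule.span ℂ {u, v} : Set (Fin 4 → ℂ)) =
      (Submodule.span ℂ {u, v} : Set (Fin 4 → ℂ)) := by
  have h25' : u 0 * v 2 - u 2 * v 0 = u 1 * v 3 - u 3 * v 1 := h25
  have h34' : u 0 * v 3 - u 3 * v 0 = -(u 1 * v 2 - u 2 * v 1) := h34
  have hc0 : (starRingEnd ℂ) (u 0 * v 1 - u 1 * v 0) = u 0 * v 1 - u 1 * v 0 :=
    Complex.conj_eq_iff_im.2 (hreal 0)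
  have hc1 : (starRingEnd ℂ) (u 0 * v 2 - u 2 * v 0) = u 0 * v 2 - u 2 * v 0 :=
    Complex.conj_eq_iff_im.2 (hreal 1)
  have hc2 : (starRingEnd ℂ) (u 0 * v 3 - u 3 * v 0) = u 0 * v 3 - u 3 * v 0 :=
    Complex.conj_eq_iff_im.2 (hreal 2)
  have hc3 : (starRingEnd ℂ) (u 1 * v 2 - u 2 * v 1) = u 1 * v 2 - u 2 * v 1 :=
    Complex.conj_eq_iff_im.2 (hreal 3)
  have hc4 : (starRingEnd ℂ) (u 1 * v 3 - u 3 * v 1) = u 1 * v 3 - u 3 * v 1 :=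
    Complex.conj_eq_iff_im.2 (hreal 4)
  have hc5 : (starRingEnd ℂ) (u 2 * v 3 - u 3 * v 2) = u 2 * v 3 - u 3 * v 2 :=
    Complex.conj_eq_iff_im.2 (hreal 5)
  simp only [map_sub, map_mul] at hc0 hc1 hc2 hc3 hc4 hc5
  have hu : jt u ∈ Submodule.span ℂ ({u, v} : Set (Fin 4 → ℂ)) := by
    apply mem_span_of_minors u v (jt u) hli
    · show (-(starRingEnd ℂ) (u 1)) * (u 1 * v 2 - u 2 * v 1)
        - ((starRingEnd ℂ) (u 0)) * (u 0 * v 2 - u 2 * v 0)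
        + (-(starRingEnd ℂ) (u 3)) * (u 0 * v 1 - u 1 * v 0) = 0
      linear_combination (-(starRingEnd ℂ) (u 0)) * h25' + ((starRingEnd ℂ) (u 0)) * hc4
        - ((starRingEnd ℂ) (u 1)) * hc2 - ((starRingEnd ℂ) (u 1)) * h34'
        + ((starRingEnd ℂ) (u 3)) * hc0
    · show (-(starRingEnd ℂ) (u 1)) * (u 1 * v 3 - u 3 * v 1)
        - ((starRingEnd ℂ) (u 0)) * (u 0 * v 3 - u 3 * v 0)
        + ((starRingEnd ℂ) (u 2)) * (u 0 * v 1 - u 1 * v 0) = 0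
      linear_combination (-(starRingEnd ℂ) (u 0)) * h34' - ((starRingEnd ℂ) (u 0)) * hc3
        + ((starRingEnd ℂ) (u 1)) * h25' + ((starRingEnd ℂ) (u 1)) * hc1
        - ((starRingEnd ℂ) (u 2)) * hc0
    · show (-(starRingEnd ℂ) (u 1)) * (u 2 * v 3 - u 3 * v 2)
        - (-(starRingEnd ℂ) (u 3)) * (u 0 * v 3 - u 3 * v 0)
        + ((starRingEnd ℂ) (u 2)) * (u 0 * v 2 - u 2 * v 0) = 0
      linear_combination ((starRingEnd ℂ) (u 1)) * hc5
        + ((starRingEnd ℂ) (u 2)) * (h25' - hc4) + ((starRingEnd ℂ) (u 3)) * (h34' + hc3)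
    · show ((starRingEnd ℂ) (u 0)) * (u 2 * v 3 - u 3 * v 2)
        - (-(starRingEnd ℂ) (u 3)) * (u 1 * v 3 - u 3 * v 1)
        + ((starRingEnd ℂ) (u 2)) * (u 1 * v 2 - u 2 * v 1) = 0
      linear_combination (-(starRingEnd ℂ) (u 0)) * hc5
        + ((starRingEnd ℂ) (u 2)) * (hc2 + h34') - ((starRingEnd ℂ) (u 3)) * (h25' + hc1)
  have hv : jt v ∈ Submodule.span ℂ ({u, v} : Set (Fin 4 → ℂ)) := by
    apply mem_span_of_minors u v (jt v) hli
    · show (-(starRingEnd ℂ) (v 1)) * (u 1 * v 2 - u 2 * v 1)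
        - ((starRingEnd ℂ) (v 0)) * (u 0 * v 2 - u 2 * v 0)
        + (-(starRingEnd ℂ) (v 3)) * (u 0 * v 1 - u 1 * v 0) = 0
      linear_combination (-(starRingEnd ℂ) (v 0)) * h25' + ((starRingEnd ℂ) (v 0)) * hc4
        - ((starRingEnd ℂ) (v 1)) * hc2 - ((starRingEnd ℂ) (v 1)) * h34'
        + ((starRingEnd ℂ) (v 3)) * hc0
    · show (-(starRingEnd ℂ) (v 1)) * (u 1 * v 3 - u 3 * v 1)
        - ((starRingEnd ℂ) (v 0)) * (u 0 * v 3 - u 3 * v 0)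
        + ((starRingEnd ℂ) (v 2)) * (u 0 * v 1 - u 1 * v 0) = 0
      linear_combination (-(starRingEnd ℂ) (v 0)) * h34' - ((starRingEnd ℂ) (v 0)) * hc3
        + ((starRingEnd ℂ) (v 1)) * h25' + ((starRingEnd ℂ) (v 1)) * hc1
        - ((starRingEnd ℂ) (v 2)) * hc0
    · show (-(starRingEnd ℂ) (v 1)) * (u 2 * v 3 - u 3 * v 2)
        - (-(starRingEnd ℂ) (v 3)) * (u 0 * v 3 - u 3 * v 0)
        + ((starRingEnd ℂ) (v 2)) * (u 0 * v 2 - u 2 * v 0) = 0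
      linear_combination ((starRingEnd ℂ) (v 1)) * hc5
        + ((starRingEnd ℂ) (v 2)) * (h25' - hc4) + ((starRingEnd ℂ) (v 3)) * (h34' + hc3)
    · show ((starRingEnd ℂ) (v 0)) * (u 2 * v 3 - u 3 * v 2)
        - (-(starRingEnd ℂ) (v 3)) * (u 1 * v 3 - u 3 * v 1)
        + ((starRingEnd ℂ) (v 2)) * (u 1 * v 2 - u 2 * v 1) = 0
      linear_combination (-(starRingEnd ℂ) (v 0)) * hc5
        + ((starRingEnd ℂ) (v 2)) * (hc2 + h34') - ((starRingEnd ℂ) (v 3)) * (h25' + hc1)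
  have key : ∀ x ∈ Submodule.span ℂ ({u, v} : Set (Fin 4 → ℂ)),
      jt x ∈ Submodule.span ℂ ({u, v} : Set (Fin 4 → ℂ)) := by
    intro x hx
    rcases Submodule.mem_span_pair.1 hx with ⟨a, b, rfl⟩
    have hjt : jt (a • u + b • v)
        = (starRingEnd ℂ) a • jt u + (starRingEnd ℂ) b • jt v := by
      funext k
      fin_cases k <;>
        simp [jt, Pi.add_apply, Pi.smul_apply, smul_eq_mul, map_add, map_mul] <;> ring
    rw [hjt]
    exact Submodule.add_mem _ (Submodule.smul_mem _ _ hu) (Submodule.smul_mem _ _ hv)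
  apply Set.Subset.antisymm
  · rintro _ ⟨x, hx, rfl⟩
    exact key x hx
  · intro x hx
    refine ⟨-(jt x), Submodule.neg_mem _ (key x hx), ?_⟩
    funext k
    fin_cases k <;> simp [jt]
end

section
/- Every plane in ℂℙ³ contains exactly one twistor line: for every 3-dimensional complex subspace H ⊆ ℂ⁴ there exists a unique 2-dimensional complex subspace W ⊆ H with j̃(W) = W. -/
/-- `jt` as a conjugate-semilinear map. -/
noncomputable def jl : (Fin 4 → ℂ) →ₛₗ[starRingEnd ℂ] (Fin 4 → ℂ) where
  toFun := jt
  map_add' x y := by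
    funext i
    fin_cases i <;> simp [jt] <;> ring
  -- `map_smul'`
  map_smul' c x := by
    funext i
    fin_cases i <;> simp [jt]

@[simp] lemma jl_apply (z : Fin 4 → ℂ) : jl z = jt z := rfl

lemma jl_jl (z : Fin 4 → ℂ) : jl (jl z) = -z := by
  funext i
  fin_cases i <;> simp [jt]

lemma jl_injective : Function.Injective jl := by
  intro x y h
  have h2 := congrArg jl h
  rw [jl_jl, jl_jl] at h2
  exact neg_injective h2

lemma map_map_jl (p : Submodule ℂ (Fin 4 → ℂ)) : (p.map jl).map jl = p := by
  ext x
  simp only [Submodule.mem_map]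
  constructor
  · rintro ⟨y, ⟨z, hz, rfl⟩, rfl⟩
    rw [jl_jl]
    exact p.neg_mem hz
  · intro hx
    refine ⟨jl (-x), ⟨-x, p.neg_mem hx, rfl⟩, ?_⟩
    rw [jl_jl, neg_neg]

lemma finrank_map_jl_le (p : Submodule ℂ (Fin 4 → ℂ)) :
    Module.finrank ℂ (p.map jl) ≤ Module.finrank ℂ p := by
  classical
  let b := Module.finBasis ℂ p
  have hspan : p = Submodule.span ℂ (Set.range fun i => ((b i : p) : Fin 4 → ℂ)) := by
    have h1 : Submodule.span ℂ (Set.range b) = (⊤ : Submodule ℂ p) := b.span_eq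
    have h2 := congrArg (Submodule.map p.subtype) h1
    rw [Submodule.map_span, Submodule.map_subtype_top, ← Set.range_comp] at h2
    exact h2.symm
  have hmap : p.map jl
      = Submodule.span ℂ (Set.range fun i => jl ((b i : p) : Fin 4 → ℂ)) := by
    conv_lhs => rw [hspan]
    rw [Submodule.map_span, ← Set.range_comp]
    rfl
  rw [hmap]
  have h := finrank_span_le_card (R := ℂ) (Set.range fun i => jl ((b i : p) : Fin 4 → ℂ))
  refine h.trans ?_
  rw [Set.toFinset_card]
  have := Fintype.card_range_le (fun i => jl ((b i : p) : Fin 4 → ℂ))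
  simpa using this

lemma finrank_map_jl (p : Submodule ℂ (Fin 4 → ℂ)) :
    Module.finrank ℂ (p.map jl) = Module.finrank ℂ p := by
  refine le_antisymm (finrank_map_jl_le p) ?_
  have := finrank_map_jl_le (p.map jl)
  rwa [map_map_jl] at this

/-- No `jl`-invariant subspace of dimension 3. -/
lemma not_inv_three (p : Submodule ℂ (Fin 4 → ℂ)) (hinv : p.map jl = p)
    (h3 : Module.finrank ℂ p = 3) : False := by
  classical
  have hpbot : p ≠ ⊥ := by
    intro h
    rw [h, finrank_bot] at h3
    omega
  obtain ⟨v, hv, hv0⟩ := Submodule.exists_mem_ne_zero_of_ne_bot hpbot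
  have hjv : jl v ∈ p := hinv ▸ Submodule.mem_map_of_mem hv
  -- v, jl v are linearly independent
  have hli : LinearIndependent ℂ ![v, jl v] := by
    rw [LinearIndependent.pair_iff]
    intro a b hab
    have h2 := congrArg jl hab
    rw [map_add, map_smulₛₗ, map_smulₛₗ, jl_jl, map_zero] at h2
    have key : ((starRingEnd ℂ) a * a + (starRingEnd ℂ) b * b) • v = 0 := by
      calc ((starRingEnd ℂ) a * a + (starRingEnd ℂ) b * b) • v
          = (starRingEnd ℂ) a • (a • v + b • jl v)
            - b • ((starRingEnd ℂ) a • jl v + (starRingEnd ℂ) b • (-v)) := by module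
        _ = 0 := by rw [hab, h2, smul_zero, smul_zero, sub_zero]
    have hc : (starRingEnd ℂ) a * a + (starRingEnd ℂ) b * b = 0 :=
      (smul_eq_zero.mp key).resolve_right hv0
    have : ((Complex.normSq a + Complex.normSq b : ℝ) : ℂ) = 0 := by
      rw [Complex.ofReal_add, Complex.normSq_eq_conj_mul_self, Complex.normSq_eq_conj_mul_self]
      exact hc
    have hnn : Complex.normSq a + Complex.normSq b = 0 := by exact_mod_cast this
    have ha : Complex.normSq a = 0 := by
      have := Complex.normSq_nonneg a
      have := Complex.normSq_nonneg b
      linarith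
    have hb : Complex.normSq b = 0 := by
      have := Complex.normSq_nonneg a
      linarith
    exact ⟨Complex.normSq_eq_zero.mp ha, Complex.normSq_eq_zero.mp hb⟩
  set p₁ : Submodule ℂ (Fin 4 → ℂ) := Submodule.span ℂ {v, jl v} with hp₁
  have hvmem : v ∈ p₁ := Submodule.subset_span (Set.mem_insert _ _)
  have hjvmem : jl v ∈ p₁ := Submodule.subset_span (Set.mem_insert_iff.mpr (Or.inr rfl))
  have hp₁le : p₁ ≤ p := by
    rw [hp₁, Submodule.span_le]
    rintro x hx
    rcases Set.mem_insert_iff.mp hx with rfl | hx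
    · exact hv
    · rw [Set.mem_singleton_iff.mp hx]; exact hjv
  have hr1 : Module.finrank ℂ p₁ = 2 := by
    have hrange : Set.range ![v, jl v] = {v, jl v} := by
      ext x
      simp [Fin.exists_fin_two]
      tauto
    have := finrank_span_eq_card (R := ℂ) hli
    rw [hrange] at this
    rw [hp₁, this]
    simp
  have hne : p₁ ≠ p := by
    intro h
    rw [h, h3] at hr1
    omega
  obtain ⟨u, hu, hu1⟩ := SetLike.exists_of_lt (lt_of_le_of_ne hp₁le hne)
  have hu0 : u ≠ 0 := by
    intro h
    exact hu1 (h ▸ p₁.zero_mem)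
  have hju : jl u ∈ p := hinv ▸ Submodule.mem_map_of_mem hu
  set p₂ : Submodule ℂ (Fin 4 → ℂ) := p₁ ⊔ Submodule.span ℂ {u} with hp₂
  have hle2 : p₂ ≤ p := sup_le hp₁le ((Submodule.span_singleton_le_iff_mem u p).mpr hu)
  have h2lt : p₁ < p₂ := by
    refine lt_of_le_of_ne le_sup_left ?_
    intro h
    exact hu1 (h ▸ (le_sup_right (a := p₁) (Submodule.mem_span_singleton_self u)))
  have hr2 : Module.finrank ℂ p₂ = 3 := by
    have hub : Module.finrank ℂ p₂ ≤ 3 := by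
      have h1 := Submodule.finrank_add_le_finrank_add_finrank p₁ (Submodule.span ℂ {u})
      rw [hr1, finrank_span_singleton hu0] at h1
      exact h1
    have hlb : 2 < Module.finrank ℂ p₂ := hr1 ▸ Submodule.finrank_lt_finrank_of_lt h2lt
    omega
  have hp2 : p₂ = p := Submodule.eq_of_le_of_finrank_le hle2 (by rw [hr2, h3])
  rw [← hp2] at hju
  obtain ⟨y, hy, z, hz, hyz⟩ := Submodule.mem_sup.mp hju
  obtain ⟨a, b, rfl⟩ := Submodule.mem_span_pair.mp hy
  obtain ⟨c, rfl⟩ := Submodule.mem_span_singleton.mp hz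
  have key := congrArg jl hyz
  rw [map_add, map_add, map_smulₛₗ, map_smulₛₗ, map_smulₛₗ, jl_jl, jl_jl] at key
  rw [← hyz] at key
  -- key : conj a • jl v + conj b • (-v) + conj c • (a•v + b•jl v + c•u) = -u
  set q := starRingEnd ℂ
  have key2 : (1 + q c * c) • u = (q b - q c * a) • v - (q a + q c * b) • jl v := by
    have h0 : (q a • jl v + q b • (-v) + q c • (a • v + b • jl v + c • u)) - (-u) = 0 :=
      sub_eq_zero.mpr key
    calc (1 + q c * c) • u
        = (q b - q c * a) • v - (q a + q c * b) • jl v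
          + ((q a • jl v + q b • (-v) + q c • (a • v + b • jl v + c • u)) - (-u)) := by module
      _ = (q b - q c * a) • v - (q a + q c * b) • jl v := by rw [h0, add_zero]
  have hne0 : (1 + q c * c) ≠ 0 := by
    have : (1 + q c * c) = ((1 + Complex.normSq c : ℝ) : ℂ) := by
      rw [Complex.ofReal_add, Complex.normSq_eq_conj_mul_self]
      simp
      exact Or.inl rfl
    rw [this]
    have := Complex.normSq_nonneg c
    exact_mod_cast (by positivity : (1 + Complex.normSq c : ℝ) ≠ 0)
  have hmem : (1 + q c * c) • u ∈ p₁ := by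
    rw [key2]
    exact sub_mem (p₁.smul_mem _ hvmem) (p₁.smul_mem _ hjvmem)
  have humem : u ∈ p₁ := by
    have h := p₁.smul_mem (1 + q c * c)⁻¹ hmem
    rwa [inv_smul_smul₀ hne0] at h
  exact hu1 humem

/-- Every plane in `ℂℙ³` contains exactly one twistor line: for every 3-dimensional complex
subspace `H ⊆ ℂ⁴` there is a unique 2-dimensional complex subspace `W ⊆ H` with
`j̃(W) = W`. -/
theorem stmt12 (H : Submodule ℂ (Fin 4 → ℂ)) (hH : Module.finrank ℂ H = 3) :
    ∃! W : Submodule ℂ (Fin 4 → ℂ),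
      Module.finrank ℂ W = 2 ∧ jt '' (W : Set (Fin 4 → ℂ)) = (W : Set (Fin 4 → ℂ)) ∧
      W ≤ H := by
  set K := H.map jl with hK
  have hK3 : Module.finrank ℂ K = 3 := by rw [hK, finrank_map_jl, hH]
  set W := H ⊓ K with hWdef
  have hWinv : W.map jl = W := by
    rw [hWdef, Submodule.map_inf _ jl_injective, hK, map_map_jl, inf_comm]
  have hle3 : Module.finrank ℂ W ≤ 3 := hH ▸ Submodule.finrank_mono inf_le_left
  have hW2 : Module.finrank ℂ W = 2 := by
    have hsum := Submodule.finrank_sup_add_finrank_inf_eq H K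
    have hsup : Module.finrank ℂ (H ⊔ K : Submodule ℂ (Fin 4 → ℂ)) ≤ 4 := by
      have := Submodule.finrank_le (H ⊔ K)
      rwa [Module.finrank_fin_fun] at this
    rw [← hWdef, hH, hK3] at hsum
    have hge : 2 ≤ Module.finrank ℂ W := by omega
    rcases (by omega : Module.finrank ℂ W = 2 ∨ Module.finrank ℂ W = 3) with h | h
    · exact h
    · exact (not_inv_three W hWinv h).elim
  refine ⟨W, ⟨hW2, ?_, inf_le_left⟩, ?_⟩
  · have h := congrArg (fun s : Submodule ℂ (Fin 4 → ℂ) => (s : Set (Fin 4 → ℂ))) hWinv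
    simp only [Submodule.map_coe] at h
    exact h
  · rintro W' ⟨h2, hinv', hle'⟩
    have hinv'' : W'.map jl = W' := SetLike.coe_injective (by rw [Submodule.map_coe]; exact hinv')
    have h1 : W' ≤ K := by
      rw [← hinv'', hK]
      exact Submodule.map_mono hle'
    exact Submodule.eq_of_le_of_finrank_le (le_inf hle' h1) (by rw [h2, hW2])
end
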